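/- arXiv:2605.00425 — 2 statements merged into one kernel-verified Lean document; each statement's English description precedes it below -/
import Mathlib

section
/- Entropy drift identity: for the surrogate objective ℓ_a(π) = A·log π_a (fixed action a, scalar A), the Fisher–Rao inner product of the natural gradients of the entropy H(π) and of ℓ_a equals A·(S_a - H(π)), where S_a = -log π_a. In particular, the entropy increases along the natural-gradient update direction of ℓ_a if and only if A·(S_a - H(π)) > 0. -/
/-- fderiv of the entropy at a positive point. -/
lemma entropy_fderiv {A : Type*} [Fintype A] (p : A → ℝ) (hne : ∀ b, p b ≠ 0) :
    HasFDerivAt (fun q : A → ℝ => -∑ b : A, q b * Real.log (q b))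
      (-∑ b : A, (Real.log (p b) + 1) • (ContinuousLinearMap.proj b : (A → ℝ) →L[ℝ] ℝ)) p := by
  have h : ∀ b : A, HasFDerivAt (fun q : A → ℝ => q b * Real.log (q b))
      ((Real.log (p b) + 1) • (ContinuousLinearMap.proj b : (A → ℝ) →L[ℝ] ℝ)) p := by
    intro b
    exact (Real.hasDerivAt_mul_log (hne b)).comp_hasFDerivAt p
      ((ContinuousLinearMap.proj b : (A → ℝ) →L[ℝ] ℝ)).hasFDerivAt
  exact (HasFDerivAt.fun_sum (fun b _ => h b)).neg

lemma logit_fderiv {A : Type*} [Fintype A] (p : A → ℝ) (hne : ∀ b, p b ≠ 0)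
    (a : A) (Adv : ℝ) :
    HasFDerivAt (fun q : A → ℝ => Adv * Real.log (q a))
      (Adv • ((p a)⁻¹ • (ContinuousLinearMap.proj a : (A → ℝ) →L[ℝ] ℝ))) p := by
  have h : HasFDerivAt (fun q : A → ℝ => Real.log (q a))
      ((p a)⁻¹ • (ContinuousLinearMap.proj a : (A → ℝ) →L[ℝ] ℝ)) p :=
    (Real.hasDerivAt_log (hne a)).comp_hasFDerivAt (f := fun q : A → ℝ => q a) p
      ((ContinuousLinearMap.proj a : (A → ℝ) →L[ℝ] ℝ)).hasFDerivAt
  exact h.const_mul Adv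

/-- Entropy drift identity: for `ℓ_a(π) = A·log π_a`, the Fisher–Rao inner
product of the natural gradients of the entropy and of `ℓ_a` equals `A·(S_a - H(π))`,
with `S_a = -log π_a`; in particular the entropy increases along the natural-gradient
direction of `ℓ_a` iff `A·(S_a - H(π)) > 0`. The natural gradients are characterized by
tangency and representation of the differential in the Fisher–Rao metric. -/
theorem stmt_6 {A : Type*} [Fintype A] (π : A → ℝ)
    (hpos : ∀ b, 0 < π b) (hsum : ∑ b : A, π b = 1)
    (a : A) (Adv : ℝ) (gradH gradL : A → ℝ)
    (hHtan : ∑ b : A, gradH b = 0)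
    (hHrep : ∀ ξ : A → ℝ, (∑ b : A, ξ b) = 0 →
      ∑ b : A, gradH b * ξ b / π b
        = fderiv ℝ (fun q : A → ℝ => -∑ b : A, q b * Real.log (q b)) π ξ)
    (hLtan : ∑ b : A, gradL b = 0)
    (hLrep : ∀ ξ : A → ℝ, (∑ b : A, ξ b) = 0 →
      ∑ b : A, gradL b * ξ b / π b
        = fderiv ℝ (fun q : A → ℝ => Adv * Real.log (q a)) π ξ) :
    (∑ b : A, gradH b * gradL b / π b
        = Adv * ((-Real.log (π a)) - (-∑ b : A, π b * Real.log (π b)))) ∧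
      (0 < fderiv ℝ (fun q : A → ℝ => -∑ b : A, q b * Real.log (q b)) π gradL ↔
        0 < Adv * ((-Real.log (π a)) - (-∑ b : A, π b * Real.log (π b)))) := by
  have hne : ∀ b, π b ≠ 0 := fun b => (hpos b).ne'
  set C : ℝ := ∑ b : A, π b * Real.log (π b) with hC
  -- value of the entropy differential on a tangent vector
  have hHval : ∀ ξ : A → ℝ, (∑ b : A, ξ b) = 0 →
      fderiv ℝ (fun q : A → ℝ => -∑ b : A, q b * Real.log (q b)) π ξ
        = -∑ b : A, Real.log (π b) * ξ b := by
    intro ξ hξ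
    rw [(entropy_fderiv π hne).fderiv]
    simp only [ContinuousLinearMap.neg_apply, ContinuousLinearMap.sum_apply,
      ContinuousLinearMap.smul_apply, ContinuousLinearMap.proj_apply, smul_eq_mul]
    rw [show ∀ x : ℝ, -x = -x from fun _ => rfl]
    congr 1
    have : ∑ b : A, (Real.log (π b) + 1) * ξ b
        = (∑ b : A, Real.log (π b) * ξ b) + ∑ b : A, ξ b := by
      rw [← Finset.sum_add_distrib]
      exact Finset.sum_congr rfl fun b _ => by ring
    rw [this, hξ, add_zero]
  -- value of the logit differential
  have hLval : ∀ ξ : A → ℝ,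
      fderiv ℝ (fun q : A → ℝ => Adv * Real.log (q a)) π ξ = Adv * (ξ a / π a) := by
    intro ξ
    rw [(logit_fderiv π hne a Adv).fderiv]
    simp [ContinuousLinearMap.smul_apply, div_eq_inv_mul]
  -- key: ∑ gradL b * log (π b) = Adv * (log (π a) - C)
  have hkey : ∑ b : A, gradL b * Real.log (π b) = Adv * (Real.log (π a) - C) := by
    have hξsum : ∑ b : A, π b * (Real.log (π b) - C) = 0 := by
      have : ∑ b : A, π b * (Real.log (π b) - C)
          = (∑ b : A, π b * Real.log (π b)) - C * ∑ b : A, π b := by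
        rw [Finset.mul_sum, ← Finset.sum_sub_distrib]
        exact Finset.sum_congr rfl fun b _ => by ring
      rw [this, hsum, ← hC]; ring
    have h1 := hLrep (fun b => π b * (Real.log (π b) - C)) hξsum
    rw [hLval] at h1
    have hL : ∑ b : A, gradL b * (π b * (Real.log (π b) - C)) / π b
        = ∑ b : A, gradL b * Real.log (π b) := by
      have : ∑ b : A, gradL b * (π b * (Real.log (π b) - C)) / π b
          = ∑ b : A, gradL b * (Real.log (π b) - C) :=
        Finset.sum_congr rfl fun b _ => by
          rw [mul_comm (π b), ← mul_assoc, mul_div_assoc, div_self (hne b), mul_one]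
      rw [this, show ∑ b : A, gradL b * (Real.log (π b) - C)
          = (∑ b : A, gradL b * Real.log (π b)) - C * ∑ b : A, gradL b by
        rw [Finset.mul_sum, ← Finset.sum_sub_distrib]
        exact Finset.sum_congr rfl fun b _ => by ring, hLtan, mul_zero, sub_zero]
    rw [hL] at h1
    rw [h1, mul_div_cancel_left₀ _ (hne a)]
  -- drift = fderiv H π gradL = -∑ gradL log π
  have hdrift : ∑ b : A, gradH b * gradL b / π b = Adv * ((-Real.log (π a)) - (-C)) := by
    rw [hHrep gradL hLtan, hHval gradL hLtan]
    have : ∑ b : A, Real.log (π b) * gradL b = ∑ b : A, gradL b * Real.log (π b) :=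
      Finset.sum_congr rfl fun b _ => mul_comm _ _
    rw [this, hkey]; ring
  refine ⟨hdrift, ?_⟩
  rw [← hHrep gradL hLtan, hdrift]
end

section
/- Regularized entropy drift decomposition: for the objective ℓ_a(π) = A·log π_a + β·ψ(H(π)) - γ·D_KL(π∥ρ), the Fisher–Rao inner product of grad^F H and grad^F ℓ_a equals A·(S_a - H) + (β·ψ'(H) + γ)·Var_{b~π}(S_b) - γ·Cov_{b~π}(S_b, S_b^ref), where S_b = -log π_b, S_b^ref = -log ρ_b, H = H(π), Var_{b~π}(S) = Σ_b π_b (S_b - H)², and Cov_{b~π}(S, S^ref) = Σ_b π_b (S_b - H)(S_b^ref - Σ_c π_c S_c^ref). -/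
open scoped BigOperators

lemma aux_sum_mul_log {A : Type*} [Fintype A] (π : A → ℝ) (hπ : ∀ b, 0 < π b) :
    HasFDerivAt (fun q : A → ℝ => ∑ b, q b * Real.log (q b))
      (∑ b, (Real.log (π b) + 1) • (ContinuousLinearMap.proj b : (A → ℝ) →L[ℝ] ℝ)) π := by
  refine HasFDerivAt.fun_sum (fun b _ => ?_)
  exact (Real.hasDerivAt_mul_log (ne_of_gt (hπ b))).comp_hasFDerivAt π
    ((ContinuousLinearMap.proj b : (A → ℝ) →L[ℝ] ℝ)).hasFDerivAt

lemma aux_sum_mul_log_div {A : Type*} [Fintype A] (π ρ : A → ℝ) (hπ : ∀ b, 0 < π b)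
    (hρ : ∀ b, 0 < ρ b) :
    HasFDerivAt (fun q : A → ℝ => ∑ b, q b * Real.log (q b / ρ b))
      (∑ b, (Real.log (π b / ρ b) + 1) • (ContinuousLinearMap.proj b : (A → ℝ) →L[ℝ] ℝ)) π := by
  refine HasFDerivAt.fun_sum (fun b _ => ?_)
  have h1 : HasDerivAt (fun x : ℝ => x * Real.log x - x * Real.log (ρ b))
      (Real.log (π b) + 1 - Real.log (ρ b)) (π b) :=
    (Real.hasDerivAt_mul_log (ne_of_gt (hπ b))).sub (hasDerivAt_mul_const _)
  have h2 : HasDerivAt (fun x : ℝ => x * Real.log (x / ρ b))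
      (Real.log (π b / ρ b) + 1) (π b) := by
    have heq : (fun x : ℝ => x * Real.log (x / ρ b)) =ᶠ[nhds (π b)]
        (fun x : ℝ => x * Real.log x - x * Real.log (ρ b)) := by
      filter_upwards [eventually_gt_nhds (hπ b)] with y hy
      rw [Real.log_div (ne_of_gt hy) (ne_of_gt (hρ b))]; ring
    have := h1.congr_of_eventuallyEq heq
    refine this.congr_deriv ?_
    rw [Real.log_div (ne_of_gt (hπ b)) (ne_of_gt (hρ b))]; ring
  exact h2.comp_hasFDerivAt π ((ContinuousLinearMap.proj b : (A → ℝ) →L[ℝ] ℝ)).hasFDerivAt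

lemma aux_gradH {A : Type*} [Fintype A] (π : A → ℝ)
    (hπ : ∀ b, 0 < π b) (hπsum : ∑ b : A, π b = 1)
    (S : A → ℝ) (H : ℝ)
    (hS : ∀ b, S b = -Real.log (π b))
    (hH : H = ∑ b : A, π b * S b)
    (gradH : A → ℝ)
    (hHtan : ∑ b : A, gradH b = 0)
    (hHrep : ∀ ξ : A → ℝ, (∑ b : A, ξ b) = 0 →
      ∑ b : A, gradH b * ξ b / π b
        = fderiv ℝ (fun q : A → ℝ => -∑ b : A, q b * Real.log (q b)) π ξ) :
    ∀ b, gradH b = π b * (S b - H) := by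
  classical
  have hπne : ∀ b, π b ≠ 0 := fun b => ne_of_gt (hπ b)
  have hHval : -(∑ b : A, π b * Real.log (π b)) = H := by
    rw [hH, Finset.sum_congr rfl (fun b _ => show π b * S b = -(π b * Real.log (π b)) by
      rw [hS]; ring), Finset.sum_neg_distrib]
  have hNeg : HasFDerivAt (fun q : A → ℝ => -∑ b : A, q b * Real.log (q b))
      (-(∑ b, (Real.log (π b) + 1) • (ContinuousLinearMap.proj b : (A → ℝ) →L[ℝ] ℝ))) π :=
    (aux_sum_mul_log π hπ).neg
  intro b
  have hξsum : (∑ c : A, ((if c = b then (1:ℝ) else 0) - π c)) = 0 := by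
    simp [Finset.sum_sub_distrib, hπsum]
  have hrep := hHrep _ hξsum
  rw [hNeg.fderiv] at hrep
  have hLHS : (∑ c : A, gradH c * ((if c = b then (1:ℝ) else 0) - π c) / π c)
      = gradH b / π b := by
    rw [Finset.sum_congr rfl (fun c _ => show
        gradH c * ((if c = b then (1:ℝ) else 0) - π c) / π c
          = (if c = b then gradH c / π c else 0) - gradH c by
      by_cases h : c = b
      · simp only [if_pos h, mul_sub, mul_one, sub_div, mul_div_assoc,
          div_self (ne_of_gt (hπ c))]
      · simp only [if_neg h, zero_sub, mul_neg, neg_div, mul_div_assoc,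
          div_self (ne_of_gt (hπ c)), mul_one]),
      Finset.sum_sub_distrib, hHtan, sub_zero, Finset.sum_ite_eq' Finset.univ b,
      if_pos (Finset.mem_univ b)]
  rw [hLHS] at hrep
  have hRHS : (-(∑ c, (Real.log (π c) + 1) •
        (ContinuousLinearMap.proj c : (A → ℝ) →L[ℝ] ℝ)))
        (fun c => (if c = b then (1:ℝ) else 0) - π c) = S b - H := by
    simp only [ContinuousLinearMap.neg_apply, ContinuousLinearMap.sum_apply,
      ContinuousLinearMap.smul_apply, ContinuousLinearMap.proj_apply, smul_eq_mul]
    rw [Finset.sum_congr rfl (fun c _ => show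
        (Real.log (π c) + 1) * ((if c = b then (1:ℝ) else 0) - π c)
          = (if c = b then Real.log (π c) + 1 else 0) - (π c * Real.log (π c) + π c) by
      by_cases h : c = b <;> simp [h] <;> ring),
      Finset.sum_sub_distrib, Finset.sum_ite_eq' Finset.univ b, if_pos (Finset.mem_univ b),
      Finset.sum_add_distrib, hπsum]
    rw [hS]
    have : (∑ c : A, π c * Real.log (π c)) = -H := by rw [← hHval]; ring
    rw [this]; ring
  rw [hRHS] at hrep
  rw [div_eq_iff (hπne b)] at hrep
  rw [hrep]; ring

/-- Regularized entropy drift decomposition: for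
`ℓ_a(π) = A·log π_a + β·ψ(H(π)) - γ·D_KL(π∥ρ)`, the Fisher–Rao inner product of
`grad^F H` and `grad^F ℓ_a` equals
`A·(S_a - H) + (β·ψ'(H) + γ)·Var_{b~π}(S) - γ·Cov_{b~π}(S, S^ref)`. -/
theorem stmt_9 {A : Type*} [Fintype A] (π ρ : A → ℝ)
    (hπ : ∀ b, 0 < π b) (hρ : ∀ b, 0 < ρ b)
    (hπsum : ∑ b : A, π b = 1) (hρsum : ∑ b : A, ρ b = 1)
    (a : A) (Adv β γ : ℝ) (ψ : ℝ → ℝ)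
    (hψ : Differentiable ℝ ψ) (hψmono : Monotone ψ)
    (S Sref : A → ℝ) (H : ℝ)
    (hS : ∀ b, S b = -Real.log (π b)) (hSref : ∀ b, Sref b = -Real.log (ρ b))
    (hH : H = ∑ b : A, π b * S b)
    (gradH gradL : A → ℝ)
    (hHtan : ∑ b : A, gradH b = 0)
    (hHrep : ∀ ξ : A → ℝ, (∑ b : A, ξ b) = 0 →
      ∑ b : A, gradH b * ξ b / π b
        = fderiv ℝ (fun q : A → ℝ => -∑ b : A, q b * Real.log (q b)) π ξ)
    (hLtan : ∑ b : A, gradL b = 0)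
    (hLrep : ∀ ξ : A → ℝ, (∑ b : A, ξ b) = 0 →
      ∑ b : A, gradL b * ξ b / π b
        = fderiv ℝ (fun q : A → ℝ =>
            Adv * Real.log (q a) + β * ψ (-∑ b : A, q b * Real.log (q b))
              - γ * ∑ b : A, q b * Real.log (q b / ρ b)) π ξ) :
    ∑ b : A, gradH b * gradL b / π b
      = Adv * (S a - H)
        + (β * deriv ψ H + γ) * (∑ b : A, π b * (S b - H) ^ 2)
        - γ * (∑ b : A, π b * (S b - H) * (Sref b - ∑ c : A, π c * Sref c)) := by
  classical
  have hπne : ∀ b, π b ≠ 0 := fun b => ne_of_gt (hπ b)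
  have hgH : ∀ b, gradH b = π b * (S b - H) :=
    aux_gradH π hπ hπsum S H hS hH gradH hHtan hHrep
  have hHval : -(∑ b : A, π b * Real.log (π b)) = H := by
    rw [hH, Finset.sum_congr rfl (fun b _ => show π b * S b = -(π b * Real.log (π b)) by
      rw [hS]; ring), Finset.sum_neg_distrib]
  -- derivative of the objective
  have hNeg : HasFDerivAt (fun q : A → ℝ => -∑ b : A, q b * Real.log (q b))
      (-(∑ b, (Real.log (π b) + 1) • (ContinuousLinearMap.proj b : (A → ℝ) →L[ℝ] ℝ))) π :=
    (aux_sum_mul_log π hπ).neg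
  have h1 : HasFDerivAt (fun q : A → ℝ => Real.log (q a))
      ((π a)⁻¹ • (ContinuousLinearMap.proj a : (A → ℝ) →L[ℝ] ℝ)) π :=
    (Real.hasDerivAt_log (hπne a)).comp_hasFDerivAt
      (f := ⇑(ContinuousLinearMap.proj a : (A → ℝ) →L[ℝ] ℝ)) π
      ((ContinuousLinearMap.proj a : (A → ℝ) →L[ℝ] ℝ)).hasFDerivAt
  have hψd : HasDerivAt ψ (deriv ψ H) (-∑ b : A, π b * Real.log (π b)) := by
    rw [hHval]; exact (hψ H).hasDerivAt
  have h2 : HasFDerivAt (fun q : A → ℝ => ψ (-∑ b : A, q b * Real.log (q b)))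
      (deriv ψ H • (-(∑ b, (Real.log (π b) + 1) •
        (ContinuousLinearMap.proj b : (A → ℝ) →L[ℝ] ℝ)))) π :=
    hψd.comp_hasFDerivAt π hNeg
  have h3 := aux_sum_mul_log_div π ρ hπ hρ
  have hL : HasFDerivAt (fun q : A → ℝ =>
      Adv * Real.log (q a) + β * ψ (-∑ b : A, q b * Real.log (q b))
        - γ * ∑ b : A, q b * Real.log (q b / ρ b))
      (Adv • ((π a)⁻¹ • (ContinuousLinearMap.proj a : (A → ℝ) →L[ℝ] ℝ))
        + β • (deriv ψ H • (-(∑ b, (Real.log (π b) + 1) •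
            (ContinuousLinearMap.proj b : (A → ℝ) →L[ℝ] ℝ))))
        - γ • (∑ b, (Real.log (π b / ρ b) + 1) •
            (ContinuousLinearMap.proj b : (A → ℝ) →L[ℝ] ℝ))) π :=
    ((h1.const_mul Adv).add (h2.const_mul β)).sub (h3.const_mul γ)
  have key := hLrep gradH hHtan
  rw [hL.fderiv] at key
  simp only [ContinuousLinearMap.add_apply, ContinuousLinearMap.sub_apply,
    ContinuousLinearMap.smul_apply, ContinuousLinearMap.sum_apply,
    ContinuousLinearMap.neg_apply, ContinuousLinearMap.proj_apply, smul_eq_mul] at key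
  -- basic sum facts
  have hZ : ∑ b : A, π b * (S b - H) = 0 := by
    rw [Finset.sum_congr rfl (fun b _ => mul_sub (π b) (S b) H),
      Finset.sum_sub_distrib, ← Finset.sum_mul, hπsum, ← hH]; ring
  set R := ∑ c : A, π c * Sref c with hR
  have hT1 : ∑ b : A, (Real.log (π b) + 1) * gradH b
      = -∑ b : A, π b * (S b - H) ^ 2 := by
    rw [Finset.sum_congr rfl (fun b _ => show
        (Real.log (π b) + 1) * gradH b
          = -(π b * (S b - H) ^ 2) - (H - 1) * (π b * (S b - H)) by
      rw [hgH b, show Real.log (π b) = -S b by rw [hS]; ring]; ring),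
      Finset.sum_sub_distrib, Finset.sum_neg_distrib, ← Finset.mul_sum, hZ]
    ring
  have hT2 : ∑ b : A, (Real.log (π b / ρ b) + 1) * gradH b
      = (∑ b : A, π b * (S b - H) * (Sref b - R)) - ∑ b : A, π b * (S b - H) ^ 2 := by
    rw [Finset.sum_congr rfl (fun b _ => show
        (Real.log (π b / ρ b) + 1) * gradH b
          = (π b * (S b - H) * (Sref b - R) - π b * (S b - H) ^ 2)
            + (1 + R - H) * (π b * (S b - H)) by
      rw [hgH b, Real.log_div (hπne b) (ne_of_gt (hρ b)),
        show Real.log (π b) = -S b by rw [hS]; ring,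
        show Real.log (ρ b) = -Sref b by rw [hSref]; ring]; ring),
      Finset.sum_add_distrib, ← Finset.mul_sum, hZ, Finset.sum_sub_distrib]
    ring
  have hLHSeq : ∑ b : A, gradH b * gradL b / π b = ∑ b : A, gradL b * gradH b / π b :=
    Finset.sum_congr rfl fun b _ => by rw [mul_comm (gradH b)]
  rw [hLHSeq, key, hT1, hT2, hgH a,
    show (π a)⁻¹ * (π a * (S a - H)) = S a - H by
      rw [← mul_assoc, inv_mul_cancel₀ (hπne a), one_mul]]
  ring
end
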